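/- Let F_1*,...,F_d* be cdfs of probability measures on ℝ, S a bounded subset of ℝ^d, π_s ∈ [0,1] for s ∈ S, and x ∈ ℝ^d. Suppose the class F^{S,π}_{⪯_1} = { F cdf on ℝ^d : F_i(t) ≤ F_i*(t) for all t and all i, and F(s) ≤ π_s for all s ∈ S } is considered. Then sup over F in this class of F(x) equals min_i F_i*(x_i) ∧ min{ π_s : s ∈ S, x ≤ s componentwise }, and the supremum is attained. -/

import Mathlib

open MeasureTheory

/-- Pointwise sharpness of the improved upper Fréchet–Hoeffding bound for the class
`F^{S,π}_{⪯₁}`: the supremum of `F(x)` over all cdfs with marginals dominated (first order)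
by `F_i*` and `F(s) ≤ π_s` on `S` equals
`min_i F_i*(x_i) ∧ min{π_s : s ∈ S, x ≤ s}`, and it is attained. -/
theorem sharpness_first_order {d : ℕ} [NeZero d]
    (ν : Fin d → Measure ℝ) (hν : ∀ i, IsProbabilityMeasure (ν i))
    (S : Set (Fin d → ℝ)) (hS : Bornology.IsBounded S)
    (π : (Fin d → ℝ) → ℝ) (hπ : ∀ s ∈ S, π s ∈ Set.Icc (0 : ℝ) 1)
    (x : Fin d → ℝ) :
    IsGreatest
      {v : ℝ | ∃ μ : Measure (Fin d → ℝ), IsProbabilityMeasure μ ∧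
        (∀ (i : Fin d) (t : ℝ),
          (μ {y : Fin d → ℝ | y i ≤ t}).toReal ≤ (ν i (Set.Iic t)).toReal) ∧
        (∀ s ∈ S, (μ {y : Fin d → ℝ | ∀ j, y j ≤ s j}).toReal ≤ π s) ∧
        v = (μ {y : Fin d → ℝ | ∀ j, y j ≤ x j}).toReal}
      (sInf ((Set.range fun i => (ν i (Set.Iic (x i))).toReal) ∪
        {p : ℝ | ∃ s ∈ S, (∀ i, x i ≤ s i) ∧ p = π s})) := by
  classical
  have hd : 0 < d := Nat.pos_of_ne_zero (NeZero.ne d)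
  set A : Set ℝ := Set.range fun i => (ν i (Set.Iic (x i))).toReal with hA
  set B : Set ℝ := {p : ℝ | ∃ s ∈ S, (∀ i, x i ≤ s i) ∧ p = π s} with hB
  have hne : (A ∪ B).Nonempty := ⟨_, Or.inl ⟨⟨0, hd⟩, rfl⟩⟩
  have hbdd : BddBelow (A ∪ B) := by
    refine ⟨0, ?_⟩
    rintro p (⟨i, rfl⟩ | ⟨s, hs, -, rfl⟩)
    · exact ENNReal.toReal_nonneg
    · exact (hπ s hs).1
  set m : ℝ := sInf (A ∪ B) with hm
  have hm0 : 0 ≤ m := by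
    refine le_csInf hne ?_
    rintro p (⟨i, rfl⟩ | ⟨s, hs, -, rfl⟩)
    · exact ENNReal.toReal_nonneg
    · exact (hπ s hs).1
  have hmA : ∀ i, m ≤ (ν i (Set.Iic (x i))).toReal := fun i => csInf_le hbdd (Or.inl ⟨i, rfl⟩)
  have hmB : ∀ s ∈ S, (∀ i, x i ≤ s i) → m ≤ π s := fun s hs hxs =>
    csInf_le hbdd (Or.inr ⟨s, hs, hxs, rfl⟩)
  have hm1 : m ≤ 1 := by
    refine (hmA ⟨0, hd⟩).trans ?_
    have h := hν ⟨0, hd⟩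
    calc (ν ⟨0, hd⟩ (Set.Iic (x ⟨0, hd⟩))).toReal
        ≤ (ν ⟨0, hd⟩ Set.univ).toReal :=
          ENNReal.toReal_mono (measure_ne_top _ _) (measure_mono (Set.subset_univ _))
      _ = 1 := by simp
  -- a bound M above x and above S
  obtain ⟨R, hR⟩ := hS.subset_closedBall 0
  set M : ℝ := max R ‖x‖ + 1 with hMdef
  have hMx : ∀ i, x i < M := by
    intro i
    have h1 : x i ≤ ‖x‖ := (le_abs_self _).trans_eq (Real.norm_eq_abs _).symm |>.trans
      (norm_le_pi_norm x i)
    calc x i ≤ ‖x‖ := h1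
      _ ≤ max R ‖x‖ := le_max_right _ _
      _ < M := by rw [hMdef]; linarith
  have hMs : ∀ s ∈ S, ∀ i, s i < M := by
    intro s hs i
    have h0 : dist s 0 ≤ R := Metric.mem_closedBall.mp (hR hs)
    have h1 : ‖s‖ ≤ R := by rwa [dist_zero_right] at h0
    have h2 : s i ≤ ‖s‖ := (le_abs_self _).trans_eq (Real.norm_eq_abs _).symm |>.trans
      (norm_le_pi_norm s i)
    calc s i ≤ R := h2.trans h1
      _ ≤ max R ‖x‖ := le_max_left _ _
      _ < M := by rw [hMdef]; linarith
  -- ENNReal quantities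
  set em : ENNReal := ENNReal.ofReal m with hemdef
  set a : ENNReal := ENNReal.ofReal (1 - m) with hadef
  have hema : em + a = 1 := by
    rw [hemdef, hadef, ← ENNReal.ofReal_add hm0 (by linarith)]
    norm_num
  have ha_ne_top : a ≠ ⊤ := ENNReal.ofReal_ne_top
  have hem_le : ∀ i, em ≤ ν i (Set.Iic (x i)) := fun i =>
    ENNReal.ofReal_le_of_le_toReal (hmA i)
  have hem_leM : ∀ i, em ≤ ν i (Set.Iic M) := fun i =>
    (hem_le i).trans (measure_mono (Set.Iic_subset_Iic.mpr (hMx i).le))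
  have hb1 : ∀ i, ν i (Set.Iic M) ≤ 1 := fun i => prob_le_one
  -- the auxiliary marginals
  set ρ : Fin d → Measure ℝ := fun i =>
    (ν i).restrict (Set.Ioi M) + (ν i (Set.Iic M) - em) • Measure.dirac (M + 1) with hρdef
  have hρapp : ∀ i (t : ℝ), ρ i (Set.Iic t) =
      ν i (Set.Iic t ∩ Set.Ioi M) +
        (ν i (Set.Iic M) - em) * (Set.Iic t).indicator 1 (M + 1) := by
    intro i t
    rw [hρdef]
    simp only [Measure.add_apply, Measure.smul_apply, smul_eq_mul]
    rw [Measure.restrict_apply measurableSet_Iic, Measure.dirac_apply' _ measurableSet_Iic]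
  have hρuniv : ∀ i, ρ i Set.univ = a := by
    intro i
    have hcompl : ν i (Set.Ioi M) = 1 - ν i (Set.Iic M) := by
      rw [← Set.compl_Iic, measure_compl measurableSet_Iic (measure_ne_top _ _), measure_univ]
    rw [hρdef]
    simp only [Measure.add_apply, Measure.smul_apply, smul_eq_mul]
    rw [Measure.restrict_apply_univ, Measure.dirac_apply_of_mem (Set.mem_univ _), mul_one,
      hcompl, tsub_add_tsub_cancel (hb1 i) (hem_leM i)]
    rw [← hema, ENNReal.add_sub_cancel_left ENNReal.ofReal_ne_top]
  haveI hρfin : ∀ i, IsFiniteMeasure (ρ i) := by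
    intro i
    constructor
    rw [hρuniv i]
    exact ENNReal.ofReal_lt_top
  haveI hρsf : ∀ i, SigmaFinite (ρ i) := fun i => inferInstance
  have hρle : ∀ i (s : Set ℝ), ρ i s ≤ a := fun i s =>
    (measure_mono (Set.subset_univ _)).trans_eq (hρuniv i)
  have hρsmall : ∀ i (t : ℝ), t < M → ρ i (Set.Iic t) = 0 := by
    intro i t ht
    rw [hρapp]
    have h1 : Set.Iic t ∩ Set.Ioi M = ∅ := by
      ext y; simp only [Set.mem_inter_iff, Set.mem_Iic, Set.mem_Ioi, Set.mem_empty_iff_false,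
        iff_false, not_and, not_lt]
      intro hy; linarith
    have h2 : (M + 1) ∉ Set.Iic t := by simp; linarith
    rw [h1, Set.indicator_of_notMem h2, measure_empty, mul_zero, add_zero]
  have hρcdf : ∀ i (t : ℝ), x i ≤ t → em + ρ i (Set.Iic t) ≤ ν i (Set.Iic t) := by
    intro i t hxt
    have hemt : em ≤ ν i (Set.Iic t) :=
      (hem_le i).trans (measure_mono (Set.Iic_subset_Iic.mpr hxt))
    rw [hρapp]
    rcases le_or_gt t M with htM | hMt
    · have h1 : Set.Iic t ∩ Set.Ioi M = ∅ := by
        ext y; simp only [Set.mem_inter_iff, Set.mem_Iic, Set.mem_Ioi, Set.mem_empty_iff_false,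
          iff_false, not_and, not_lt]
        intro hy; linarith
      have h2 : (M + 1) ∉ Set.Iic t := by simp; linarith
      rw [h1, Set.indicator_of_notMem h2, measure_empty, mul_zero, add_zero, add_zero]
      exact hemt
    · have h1 : Set.Iic t ∩ Set.Ioi M = Set.Ioc M t := by
        ext y; simp only [Set.mem_inter_iff, Set.mem_Iic, Set.mem_Ioi, Set.mem_Ioc]
        tauto
      have hMt' : ν i (Set.Iic M) ≤ ν i (Set.Iic t) :=
        measure_mono (Set.Iic_subset_Iic.mpr hMt.le)
      have hIoc : ν i (Set.Ioc M t) = ν i (Set.Iic t) - ν i (Set.Iic M) := by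
        rw [← Set.Iic_sdiff_Iic,
          measure_diff (Set.Iic_subset_Iic.mpr hMt.le) measurableSet_Iic.nullMeasurableSet
            (measure_ne_top _ _)]
      rw [h1, hIoc]
      by_cases h2 : M + 1 ≤ t
      · rw [Set.indicator_of_mem (Set.mem_Iic.mpr h2), Pi.one_apply, mul_one]
        apply le_of_eq
        rw [tsub_add_tsub_cancel hMt' (hem_leM i), add_tsub_cancel_of_le hemt]
      · rw [Set.indicator_of_notMem (by simpa using h2), mul_zero, add_zero]
        calc em + (ν i (Set.Iic t) - ν i (Set.Iic M))
            ≤ ν i (Set.Iic M) + (ν i (Set.Iic t) - ν i (Set.Iic M)) :=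
              add_le_add_left (hem_leM i) _
          _ = ν i (Set.Iic t) := add_tsub_cancel_of_le hMt'
  -- normalization constant
  set c : ENNReal := (a ^ (d - 1))⁻¹ with hcdef
  have hkey : ∀ z : ENNReal, z ≤ a → c * (z * a ^ (d - 1)) = z := by
    intro z hz
    rcases eq_or_ne a 0 with ha | ha
    · have hz0 : z = 0 := le_antisymm (ha ▸ hz) (zero_le)
      simp [hz0]
    · have hpow0 : a ^ (d - 1) ≠ 0 := pow_ne_zero _ ha
      have hpowt : a ^ (d - 1) ≠ ⊤ := ENNReal.pow_ne_top ha_ne_top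
      calc c * (z * a ^ (d - 1)) = z * ((a ^ (d - 1))⁻¹ * a ^ (d - 1)) := by
            rw [hcdef]; ring
        _ = z := by rw [ENNReal.inv_mul_cancel hpow0 hpowt, mul_one]
  -- the candidate measure
  set μ : Measure (Fin d → ℝ) := em • Measure.dirac x + c • Measure.pi ρ with hμdef
  have hprod_ite : ∀ (i : Fin d) (w : ENNReal),
      (∏ j : Fin d, (if j = i then w else a)) = w * a ^ (d - 1) := by
    intro i w
    rw [← Finset.mul_prod_erase Finset.univ _ (Finset.mem_univ i), if_pos rfl]
    congr 1
    rw [Finset.prod_congr rfl (fun j hj => if_neg (Finset.ne_of_mem_erase hj)),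
      Finset.prod_const, Finset.card_erase_of_mem (Finset.mem_univ i), Finset.card_univ,
      Fintype.card_fin]
  -- evaluation on marginal sets
  have hmeas1 : ∀ (i : Fin d) (t : ℝ), MeasurableSet {y : Fin d → ℝ | y i ≤ t} := by
    intro i t
    exact measurableSet_le (measurable_pi_apply i) measurable_const
  have hset1 : ∀ (i : Fin d) (t : ℝ), {y : Fin d → ℝ | y i ≤ t} =
      Set.univ.pi (fun j => if j = i then Set.Iic t else Set.univ) := by
    intro i t
    ext y
    simp only [Set.mem_setOf_eq, Set.mem_pi, Set.mem_univ, forall_true_left]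
    constructor
    · intro h j
      by_cases hj : j = i
      · subst hj; simpa using h
      · simp [hj]
    · intro h
      have := h i
      simpa using this
  have hμ_margin : ∀ (i : Fin d) (t : ℝ),
      μ {y : Fin d → ℝ | y i ≤ t} = em * (if x i ≤ t then 1 else 0) + ρ i (Set.Iic t) := by
    intro i t
    rw [hμdef]
    simp only [Measure.add_apply, Measure.smul_apply, smul_eq_mul]
    congr 1
    · rw [Measure.dirac_apply' _ (hmeas1 i t), Set.indicator_apply]
      simp only [Set.mem_setOf_eq, Pi.one_apply]
    · rw [hset1 i t, Measure.pi_pi]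
      have : (∏ j : Fin d, ρ j (if j = i then Set.Iic t else Set.univ)) =
          ∏ j : Fin d, (if j = i then ρ i (Set.Iic t) else a) := by
        refine Finset.prod_congr rfl fun j _ => ?_
        by_cases hj : j = i
        · subst hj; simp
        · rw [if_neg hj, if_neg hj, hρuniv j]
      rw [this, hprod_ite, hkey _ (hρle i _)]
  -- evaluation on lower-orthant sets below M
  have hsetpi : ∀ s : Fin d → ℝ, {y : Fin d → ℝ | ∀ j, y j ≤ s j} =
      Set.univ.pi (fun j => Set.Iic (s j)) := by
    intro s
    ext y
    simp only [Set.mem_setOf_eq, Set.mem_pi, Set.mem_univ, forall_true_left, Set.mem_Iic]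
  have hμ_orth : ∀ s : Fin d → ℝ, (∀ j, s j < M) →
      μ {y : Fin d → ℝ | ∀ j, y j ≤ s j} = em * (if ∀ j, x j ≤ s j then 1 else 0) := by
    intro s hsM
    rw [hμdef]
    simp only [Measure.add_apply, Measure.smul_apply, smul_eq_mul]
    have hmeas : MeasurableSet {y : Fin d → ℝ | ∀ j, y j ≤ s j} := by
      rw [hsetpi s]
      exact MeasurableSet.univ_pi fun j => measurableSet_Iic
    have h1 : Measure.dirac x {y : Fin d → ℝ | ∀ j, y j ≤ s j} =
        (if ∀ j, x j ≤ s j then 1 else 0) := by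
      rw [Measure.dirac_apply' _ hmeas, Set.indicator_apply]
      simp only [Set.mem_setOf_eq, Pi.one_apply]
    have h2 : Measure.pi ρ {y : Fin d → ℝ | ∀ j, y j ≤ s j} = 0 := by
      rw [hsetpi s, Measure.pi_pi]
      exact Finset.prod_eq_zero (Finset.mem_univ ⟨0, hd⟩) (hρsmall _ _ (hsM _))
    rw [h1, h2, mul_zero, add_zero]
  -- μ is a probability measure
  have hμuniv : μ Set.univ = 1 := by
    rw [hμdef]
    simp only [Measure.add_apply, Measure.smul_apply, smul_eq_mul]
    have h1 : Measure.pi ρ Set.univ = a ^ d := by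
      rw [← Set.pi_univ Set.univ, Measure.pi_pi]
      simp only [hρuniv]
      rw [Finset.prod_const, Finset.card_univ, Fintype.card_fin]
    have h2 : c * a ^ d = a := by
      have hds : a ^ d = a * a ^ (d - 1) := by
        conv_lhs => rw [← Nat.succ_pred_eq_of_pos hd]
        rw [pow_succ, mul_comm, Nat.pred_eq_sub_one]
      rw [hds]; exact hkey a le_rfl
    rw [h1, h2, measure_univ, mul_one, hema]
  haveI hμprob : IsProbabilityMeasure μ := ⟨hμuniv⟩
  -- marginal constraint
  have hc1 : ∀ (i : Fin d) (t : ℝ),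
      (μ {y : Fin d → ℝ | y i ≤ t}).toReal ≤ (ν i (Set.Iic t)).toReal := by
    intro i t
    refine ENNReal.toReal_mono (measure_ne_top _ _) ?_
    rw [hμ_margin i t]
    by_cases h : x i ≤ t
    · rw [if_pos h, mul_one]
      exact hρcdf i t h
    · rw [if_neg h, mul_zero, zero_add]
      rw [hρsmall i t ((lt_of_not_ge h).trans (hMx i))]
      exact zero_le
  -- S constraint
  have hc2 : ∀ s ∈ S, (μ {y : Fin d → ℝ | ∀ j, y j ≤ s j}).toReal ≤ π s := by
    intro s hs
    rw [hμ_orth s (fun j => hMs s hs j)]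
    by_cases h : ∀ j, x j ≤ s j
    · rw [if_pos h, mul_one, hemdef, ENNReal.toReal_ofReal hm0]
      exact hmB s hs h
    · rw [if_neg h, mul_zero]
      simpa using (hπ s hs).1
  -- the attained value
  have hval : (μ {y : Fin d → ℝ | ∀ j, y j ≤ x j}).toReal = m := by
    rw [hμ_orth x (fun j => hMx j), if_pos (fun j => le_refl (x j)), mul_one, hemdef,
      ENNReal.toReal_ofReal hm0]
  constructor
  · exact ⟨μ, hμprob, hc1, hc2, hval.symm⟩
  · rintro v ⟨μ', hμ', h1, h2, rfl⟩
    refine le_csInf hne ?_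
    rintro p (⟨i, rfl⟩ | ⟨s, hs, hxs, rfl⟩)
    · refine le_trans ?_ (h1 i (x i))
      refine ENNReal.toReal_mono (measure_ne_top _ _) (measure_mono ?_)
      intro y hy
      exact hy i
    · refine le_trans ?_ (h2 s hs)
      refine ENNReal.toReal_mono (measure_ne_top _ _) (measure_mono ?_)
      intro y hy j
      exact (hy j).trans (hxs j)
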